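/- Let S : X → Y be a measurable statistic. Then S is Bayes sufficient for the model indicator if and only if there exists a measurable function g : Y → ℝ^{M−1} such that g(S(x)) = T(x) for μ-almost every x. -/

import Mathlib

open MeasureTheory

variable {X : Type*} [MeasurableSpace X]

/-- Posterior probability of model `i` given data `x`, under prior `p`:
`Pr_p(M_i | x) = p i * f i x / ∑ j, p j * f j x`. -/
noncomputable def post (M : ℕ) (f : Fin M → X → ℝ) (p : Fin M → ℝ) (i : Fin M) (x : X) : ℝ :=
  p i * f i x / ∑ j, p j * f j x

/-- Marginal data distribution `μ_p = ∑ i, p i • μ_i` under prior `p`, where `μ_i` has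
density `f i` with respect to `ν`. -/
noncomputable def marg (ν : Measure X) (M : ℕ) (f : Fin M → X → ℝ) (p : Fin M → ℝ) :
    Measure X :=
  ∑ i, ENNReal.ofReal (p i) • ν.withDensity (fun x => ENNReal.ofReal (f i x))

/-- The statistic `T(x) = (T_1(x), …, T_{M-1}(x))` with `T_i(x) = f i x / ∑ j, f j x`,
the posterior model probabilities under the uniform prior (first `M - 1` coordinates). -/
noncomputable def Tstat (M : ℕ) (f : Fin M → X → ℝ) (x : X) (i : Fin (M - 1)) : ℝ :=
  f (Fin.castLE (Nat.sub_le M 1) i) x / ∑ j, f j x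

/-- `p` is a prior over the `M` models. -/
def IsPrior (M : ℕ) (p : Fin M → ℝ) : Prop :=
  (∀ i, 0 ≤ p i) ∧ ∑ i, p i = 1

/-- `S` is Bayes sufficient for the model indicator: for every prior `p` and every model `i`,
the conditional expectation of `Pr_p(M_i | ·)` given `σ(S)` under `μ_p` equals
`Pr_p(M_i | ·)` `μ_p`-almost everywhere. -/
noncomputable def BayesSufficient (ν : Measure X) (M : ℕ) (f : Fin M → X → ℝ)
    {Y : Type*} [MeasurableSpace Y] (S : X → Y) : Prop :=
  ∀ p : Fin M → ℝ, IsPrior M p → ∀ i : Fin M,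
    (marg ν M f p)[post M f p i|MeasurableSpace.comap S inferInstance]
      =ᵐ[marg ν M f p] post M f p i

section Aux

open Filter Topology

lemma simpleFunc_factor {X Y : Type*} [MeasurableSpace Y] (S : X → Y)
    (φ : @SimpleFunc X (MeasurableSpace.comap S inferInstance) ℝ) :
    ∃ t : Y → ℝ, Measurable t ∧ ∀ x, φ x = t (S x) := by
  induction φ using SimpleFunc.induction with
  | const c hs =>
    obtain ⟨B, hB, hBs⟩ := id hs
    refine ⟨B.indicator fun _ => c, measurable_const.indicator hB, fun x => ?_⟩
    rw [@SimpleFunc.piecewise_apply X ℝ (MeasurableSpace.comap S inferInstance)]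
    subst hBs
    by_cases hx : S x ∈ B <;> simp [SimpleFunc.piecewise_apply, Set.indicator_apply, hx]
  | add _ hf hg =>
    obtain ⟨t1, ht1, he1⟩ := hf
    obtain ⟨t2, ht2, he2⟩ := hg
    exact ⟨t1 + t2, ht1.add ht2, fun x => by simp [he1 x, he2 x]⟩

lemma doobDynkin {X Y : Type*} [MeasurableSpace Y] (S : X → Y) (h : X → ℝ)
    (hh : Measurable[MeasurableSpace.comap S inferInstance] h) :
    ∃ g : Y → ℝ, Measurable g ∧ ∀ x, h x = g (S x) := by
  have hsm : StronglyMeasurable[MeasurableSpace.comap S inferInstance] h :=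
    hh.stronglyMeasurable
  choose t ht hte using fun n => simpleFunc_factor S (hsm.approx n)
  set A := {y | ∃ c, Tendsto (fun n => t n y) atTop (𝓝 c)} with hA
  have hAm : MeasurableSet A := measurableSet_exists_tendsto ht
  set t' : ℕ → Y → ℝ := fun n => A.indicator (t n) with ht'
  have hconv : ∀ y, ∃ c, Tendsto (fun n => t' n y) atTop (𝓝 c) := by
    intro y
    by_cases hy : y ∈ A
    · have hyA := hy
      obtain ⟨c, hc⟩ := hy
      refine ⟨c, ?_⟩
      have he : (fun n => t' n y) = fun n => t n y := by
        funext n; simp [ht', Set.indicator_of_mem hyA]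
      rwa [he]
    · exact ⟨0, by simp [ht', Set.indicator_of_notMem hy, tendsto_const_nhds]⟩
  set g : Y → ℝ := fun y => limUnder atTop fun n => t' n y with hgdef
  have hgt : ∀ y, Tendsto (fun n => t' n y) atTop (𝓝 (g y)) := fun y =>
    tendsto_nhds_limUnder (hconv y)
  have hgm : Measurable g := by
    refine measurable_of_tendsto_metrizable (fun n => (ht n).indicator hAm) ?_
    rw [tendsto_pi_nhds]; exact hgt
  refine ⟨g, hgm, fun x => ?_⟩
  have hSx : S x ∈ A := ⟨h x, by simpa [← hte] using hsm.tendsto_approx x⟩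
  have h1 : Tendsto (fun n => t' n (S x)) atTop (𝓝 (h x)) := by
    simpa [ht', Set.indicator_of_mem hSx, ← hte] using hsm.tendsto_approx x
  exact tendsto_nhds_unique h1 (hgt (S x))

lemma marg_apply (ν : Measure X) (M : ℕ) (f : Fin M → X → ℝ) (p : Fin M → ℝ) (A : Set X) :
    marg ν M f p A
      = ∑ i, ENNReal.ofReal (p i) * ν.withDensity (fun x => ENNReal.ofReal (f i x)) A := by
  simp [marg, Measure.finset_sum_apply, Measure.smul_apply, smul_eq_mul]

lemma marg_ac (ν : Measure X) (M : ℕ) (f : Fin M → X → ℝ) (p : Fin M → ℝ) :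
    marg ν M f p ≪ ν := by
  refine Measure.AbsolutelyContinuous.mk fun A hA h0 => ?_
  rw [marg_apply]
  have h1 : ∀ i, ν.withDensity (fun x => ENNReal.ofReal (f i x)) A = 0 := fun i =>
    withDensity_absolutelyContinuous ν _ h0
  simp [h1]

lemma marg_ac_unif (ν : Measure X) (M : ℕ) (hM : M ≠ 0) (f : Fin M → X → ℝ) (p : Fin M → ℝ) :
    marg ν M f p ≪ marg ν M f (fun _ => (M : ℝ)⁻¹) := by
  refine Measure.AbsolutelyContinuous.mk fun A hA h0 => ?_
  rw [marg_apply] at h0 ⊢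
  have hM' : ENNReal.ofReal ((M : ℝ)⁻¹) ≠ 0 := by
    rw [Ne, ENNReal.ofReal_eq_zero, not_le]
    have : 0 < (M : ℝ) := by exact_mod_cast Nat.pos_of_ne_zero hM
    positivity
  have h1 := (Finset.sum_eq_zero_iff).1 h0
  refine Finset.sum_eq_zero fun i _ => ?_
  rcases mul_eq_zero.1 (h1 i (Finset.mem_univ i)) with h | h
  · exact absurd h hM'
  · simp [h]

lemma measurable_post (M : ℕ) (f : Fin M → X → ℝ) (hf : ∀ i, Measurable (f i))
    (p : Fin M → ℝ) (i : Fin M) : Measurable (post M f p i) :=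
  (measurable_const.mul (hf i)).div
    (Finset.measurable_sum _ fun j _ => measurable_const.mul (hf j))

lemma post_nonneg (M : ℕ) (f : Fin M → X → ℝ) (hf : ∀ i x, 0 ≤ f i x) (p : Fin M → ℝ)
    (hp : ∀ i, 0 ≤ p i) (i : Fin M) (x : X) : 0 ≤ post M f p i x :=
  div_nonneg (mul_nonneg (hp i) (hf i x))
    (Finset.sum_nonneg fun j _ => mul_nonneg (hp j) (hf j x))

lemma post_le_one (M : ℕ) (f : Fin M → X → ℝ) (hf : ∀ i x, 0 ≤ f i x) (p : Fin M → ℝ)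
    (hp : ∀ i, 0 ≤ p i) (i : Fin M) (x : X) : post M f p i x ≤ 1 := by
  refine div_le_one_of_le₀ ?_ (Finset.sum_nonneg fun j _ => mul_nonneg (hp j) (hf j x))
  exact Finset.single_le_sum (f := fun j => p j * f j x)
    (fun j _ => mul_nonneg (hp j) (hf j x)) (Finset.mem_univ i)

end Aux


/-- **Theorem 1 (Prangle et al.).** A measurable statistic `S : X → Y` is Bayes sufficient for
the model indicator if and only if there is a measurable `g : Y → ℝ^{M-1}` with
`g (S x) = T x` for `μ`-almost every `x`, where `μ` is the marginal under the uniform prior. -/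
theorem bayesSufficient_iff_factorization
    (ν : Measure X) [SigmaFinite ν] (M : ℕ) (hM : 2 ≤ M)
    (f : Fin M → X → ℝ) (hf_meas : ∀ i, Measurable (f i))
    (hf_nonneg : ∀ i x, 0 ≤ f i x) (hf_one : ∀ i, ∫ x, f i x ∂ν = 1)
    (hf_pos : ∀ᵐ x ∂ν, 0 < ∑ j, f j x)
    {Y : Type*} [MeasurableSpace Y] (S : X → Y) (hS : Measurable S) :
    BayesSufficient ν M f S ↔
      ∃ g : Y → Fin (M - 1) → ℝ, Measurable g ∧
        ∀ᵐ x ∂(marg ν M f fun _ => (M : ℝ)⁻¹), g (S x) = Tstat M f x := by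
  have hM0 : (M : ℝ) ≠ 0 := by positivity
  have hf_int : ∀ i, Integrable (f i) ν := by
    intro i
    by_contra h
    have := hf_one i
    rw [integral_undef h] at this
    norm_num at this
  have hlint : ∀ i, ∫⁻ x, ENNReal.ofReal (f i x) ∂ν = 1 := by
    intro i
    rw [← ofReal_integral_eq_lintegral_ofReal (hf_int i) (Filter.Eventually.of_forall (hf_nonneg i)),
      hf_one i, ENNReal.ofReal_one]
  have hfin : ∀ p : Fin M → ℝ, IsFiniteMeasure (marg ν M f p) := by
    intro p
    constructor
    rw [marg_apply]
    refine ENNReal.sum_lt_top.2 fun i _ => ?_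
    rw [withDensity_apply _ MeasurableSet.univ, Measure.restrict_univ, hlint i, mul_one]
    exact ENNReal.ofReal_lt_top
  have hpost_int : ∀ (p : Fin M → ℝ), (∀ i, 0 ≤ p i) → ∀ i,
      Integrable (post M f p i) (marg ν M f p) := by
    intro p hp i
    haveI := hfin p
    refine (integrable_const (1 : ℝ)).mono'
      ((measurable_post M f hf_meas p i).aestronglyMeasurable) ?_
    refine Filter.Eventually.of_forall fun x => ?_
    rw [Real.norm_eq_abs, abs_of_nonneg (post_nonneg M f hf_nonneg p hp i x)]
    exact post_le_one M f hf_nonneg p hp i x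
  constructor
  · -- forward: Bayes sufficiency ⇒ factorization
    intro hBS
    have hu : IsPrior M fun _ => (M : ℝ)⁻¹ := by
      refine ⟨fun _ => by positivity, ?_⟩
      simp [Finset.sum_const, Finset.card_univ]
      field_simp
    have key : ∀ i : Fin (M - 1), ∃ g : Y → ℝ, Measurable g ∧
        ∀ᵐ x ∂(marg ν M f fun _ => (M : ℝ)⁻¹), g (S x) = Tstat M f x i := by
      intro i
      set i' : Fin M := Fin.castLE (Nat.sub_le M 1) i with hi'
      have hcond := hBS _ hu i'
      obtain ⟨g, hg, hge⟩ := doobDynkin S _ (stronglyMeasurable_condExp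
        (m := MeasurableSpace.comap S inferInstance)
        (μ := marg ν M f fun _ => (M : ℝ)⁻¹) (f := post M f (fun _ => (M : ℝ)⁻¹) i')).measurable
      refine ⟨g, hg, ?_⟩
      filter_upwards [hcond] with x hx
      have h1 : post M f (fun _ => (M : ℝ)⁻¹) i' x = Tstat M f x i := by
        unfold post Tstat
        rw [← Finset.mul_sum, mul_div_mul_left _ _ (inv_ne_zero hM0)]
      rw [← h1, ← hx, hge x]
    choose g hg hge using key
    refine ⟨fun y i => g i y, measurable_pi_lambda _ fun i => hg i, ?_⟩
    filter_upwards [MeasureTheory.ae_all_iff.2 hge] with x hx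
    funext i
    exact hx i
  · -- backward: factorization ⇒ Bayes sufficiency
    intro ⟨g, hgm, hge⟩ p hp i
    haveI := hfin p
    obtain ⟨n, rfl⟩ : ∃ n, M = n + 1 := ⟨M - 1, by omega⟩
    have hpos' : ∀ᵐ x ∂(marg ν (n + 1) f p), 0 < ∑ j, f j x :=
      (marg_ac ν (n + 1) f p).ae_le hf_pos
    have hge' : ∀ᵐ x ∂(marg ν (n + 1) f p), g (S x) = Tstat (n + 1) f x :=
      (marg_ac_unif ν (n + 1) (by omega) f p).ae_le hge
    set ext : (Fin n → ℝ) → Fin (n + 1) → ℝ :=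
      fun t j => if hj : (j : ℕ) < n then t ⟨j, hj⟩ else 1 - ∑ k, t k with hext_def
    have hext_meas : ∀ j, Measurable fun t => ext t j := by
      intro j
      by_cases hj : (j : ℕ) < n
      · simpa [hext_def, hj] using measurable_pi_apply (⟨(j : ℕ), hj⟩ : Fin n)
      · simpa [hext_def, hj] using
          (show Measurable fun t : Fin n → ℝ => 1 - ∑ k, t k from
            measurable_const.sub (Finset.measurable_sum Finset.univ fun k _ => measurable_pi_apply k))
    set φ : (Fin n → ℝ) → ℝ := fun t => p i * ext t i / ∑ j, p j * ext t j with hφ_def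
    have hφ : Measurable φ :=
      (measurable_const.mul (hext_meas i)).div
        (Finset.measurable_sum _ fun j _ => measurable_const.mul (hext_meas j))
    have hkey : ∀ x, 0 < ∑ j, f j x → g (S x) = Tstat (n + 1) f x →
        post (n + 1) f p i x = φ (g (S x)) := by
      intro x hsx hgx
      rw [hgx]
      set s := ∑ j, f j x with hs_def
      have hs : s ≠ 0 := ne_of_gt hsx
      have hTe : ∀ j : Fin (n + 1), ext (Tstat (n + 1) f x) j = f j x / s := by
        intro j
        by_cases hj : (j : ℕ) < n
        · simp only [hext_def, hj, dif_pos]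
          unfold Tstat
          congr 1
        · have hjl : j = Fin.last n := by
            refine Fin.ext ?_
            have := j.isLt
            simp only [Fin.val_last]
            omega
          simp only [hext_def, hj, dif_neg, not_false_iff]
          subst hjl
          have hsum : ∑ k : Fin n, Tstat (n + 1) f x k = (∑ k : Fin n, f k.castSucc x) / s := by
            unfold Tstat
            rw [Finset.sum_div]
            refine Finset.sum_congr rfl fun k _ => ?_
            congr 1
          rw [hsum]
          have hsplit : s = (∑ k : Fin n, f k.castSucc x) + f (Fin.last n) x := by
            rw [hs_def, Fin.sum_univ_castSucc]
          field_simp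
          linarith [hsplit]
      unfold post
      simp only [hφ_def]
      simp_rw [hTe]
      have : ∀ j : Fin (n + 1), p j * (f j x / s) = p j * f j x / s := fun j =>
        (mul_div_assoc _ _ _).symm
      simp_rw [this, ← Finset.sum_div]
      rcases eq_or_ne (∑ j, p j * f j x) 0 with h0 | h0
      · simp [h0]
      · field_simp
    have haes : AEStronglyMeasurable[MeasurableSpace.comap S inferInstance]
        (post (n + 1) f p i) (marg ν (n + 1) f p) := by
      refine ⟨fun x => φ (g (S x)), ?_, ?_⟩
      · exact ((hφ.comp hgm).comp (Measurable.of_comap_le le_rfl)).stronglyMeasurable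
      · filter_upwards [hpos', hge'] with x h1 h2
        exact hkey x h1 h2
    exact condExp_of_aestronglyMeasurable' hS.comap_le haes (hpost_int p hp.1 i)
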